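/- Let n and m be positive integers, let W be a linear subspace of ℚⁿ, and let E = {−1,1}ⁿ ⊆ ℚⁿ. Suppose E = E₁ ⊔ E₂ ⊔ ⋯ ⊔ E_m is a partition of E such that each part E_i is contained in some coset of W, such that E₁ = −E₂ (i.e., E₁ is the pointwise negation of E₂), and such that E₁ is not contained in W. Let η ∈ {1, −1} and suppose λ : E → ℚ satisfies: the sum of λ(ε) over ε ∈ E₁ equals 1, the sum of λ(ε) over ε ∈ E₂ equals η, and the sum of λ(ε) over ε ∈ E_i equals 0 for every i > 2. Then there exist rational numbers a₁, …, aₙ such that: Σ_{k=1}^{n} Σ_{ε ∈ E₁} λ(ε) ε_k a_k = 1, Σ_{k=1}^{n} Σ_{ε ∈ E₂} λ(ε) ε_k a_k = −η, and Σ_{k=1}^{n} Σ_{ε ∈ E_i} λ(ε) ε_k a_k = 0 for every i > 2. -/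
import Mathlib


/-- The cube linear algebra lemma (Lemma 4.8 of the paper). Let `W ⊆ ℚⁿ` be a linear
subspace and let `P 0 ⊔ P 1 ⊔ ⋯ ⊔ P (m-1)` be a partition of the cube
`E = {±1}ⁿ ⊆ ℚⁿ` such that each part is contained in a coset of `W`, the part `P 1`
is the pointwise negation of `P 0`, and `P 0` is not contained in `W`. If
`λ : E → ℚ` has sum `1` over `P 0`, sum `η = ±1` over `P 1`, and sum `0` over each
other part, then there are rationals `a 1, …, a n` with
`Σ_k Σ_{ε ∈ P i} λ(ε) ε_k a_k` equal to `1`, `-η`, `0` for `i = 0`, `i = 1`, `i ≥ 2`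
respectively. -/
theorem cube_linear_algebra
    (n m : ℕ) (hn : 0 < n) (hm : 2 ≤ m)
    (W : Submodule ℚ (Fin n → ℚ))
    (P : Fin m → Set (Fin n → ℚ))
    (hUnion : (⋃ i, P i) = {ε : Fin n → ℚ | ∀ k, ε k = 1 ∨ ε k = -1})
    (hDisj : ∀ i j : Fin m, i ≠ j → Disjoint (P i) (P j))
    (hCoset : ∀ i : Fin m, ∃ v : Fin n → ℚ, P i ⊆ {x | x - v ∈ W})
    (hNeg : P ⟨1, by omega⟩ = (fun x : Fin n → ℚ => -x) '' P ⟨0, by omega⟩)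
    (hNotW : ¬ P ⟨0, by omega⟩ ⊆ (W : Set (Fin n → ℚ)))
    (η : ℚ) (hη : η = 1 ∨ η = -1)
    (lam : (Fin n → ℚ) → ℚ)
    (hSum0 : ∑ᶠ ε ∈ P ⟨0, by omega⟩, lam ε = 1)
    (hSum1 : ∑ᶠ ε ∈ P ⟨1, by omega⟩, lam ε = η)
    (hSumRest : ∀ i : Fin m, 2 ≤ (i : ℕ) → ∑ᶠ ε ∈ P i, lam ε = 0) :
    ∃ a : Fin n → ℚ,
      (∑ k : Fin n, ∑ᶠ ε ∈ P ⟨0, by omega⟩, lam ε * ε k * a k) = 1 ∧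
      (∑ k : Fin n, ∑ᶠ ε ∈ P ⟨1, by omega⟩, lam ε * ε k * a k) = -η ∧
      (∀ i : Fin m, 2 ≤ (i : ℕ) →
        (∑ k : Fin n, ∑ᶠ ε ∈ P i, lam ε * ε k * a k) = 0) := by
  classical
  -- each part is finite
  have hcube : ({ε : Fin n → ℚ | ∀ k, ε k = 1 ∨ ε k = -1}).Finite := by
    have hsub : {ε : Fin n → ℚ | ∀ k, ε k = 1 ∨ ε k = -1} ⊆
        Set.pi Set.univ (fun _ => ({1, -1} : Set ℚ)) := by
      intro ε hε k _
      rcases hε k with h | h <;> simp [h]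
    exact (Set.Finite.pi (fun _ => (Set.finite_singleton (-1 : ℚ)).insert 1)).subset hsub
  have hfin : ∀ i : Fin m, (P i).Finite := by
    intro i
    exact hcube.subset (hUnion ▸ Set.subset_iUnion P i)
  -- pick ε₀ ∈ P 0 \ W
  obtain ⟨ε₀, hε₀P, hε₀W⟩ := Set.not_subset.mp hNotW
  -- a dual functional vanishing on W but not at ε₀
  have hq : (W.mkQ ε₀ : (Fin n → ℚ) ⧸ W) ≠ 0 := by
    simpa [Submodule.mkQ_apply, Submodule.Quotient.mk_eq_zero] using hε₀W
  obtain ⟨g, hg⟩ : ∃ g : ((Fin n → ℚ) ⧸ W) →ₗ[ℚ] ℚ, g (W.mkQ ε₀) ≠ 0 := by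
    by_contra h
    push_neg at h
    exact hq ((Module.forall_dual_apply_eq_zero_iff ℚ _).mp h)
  set f : (Fin n → ℚ) →ₗ[ℚ] ℚ := g.comp W.mkQ with hf
  have hfW : ∀ x ∈ W, f x = 0 := by
    intro x hx
    simp [hf, Submodule.mkQ_apply, (Submodule.Quotient.mk_eq_zero W).mpr hx]
  set c : ℚ := f ε₀ with hc
  have hc0 : c ≠ 0 := hg
  -- f is constant on each part
  have hconst : ∀ i : Fin m, ∃ ci : ℚ, ∀ ε ∈ P i, f ε = ci := by
    intro i
    obtain ⟨v, hv⟩ := hCoset i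
    refine ⟨f v, fun ε hε => ?_⟩
    have h1 : f (ε - v) = 0 := hfW _ (hv hε)
    have h2 : f ε - f v = 0 := by rw [← map_sub]; exact h1
    linarith
  -- the candidate vector
  set a : Fin n → ℚ := fun k => f (fun j => if k = j then 1 else 0) / c with ha
  -- the key computation
  have hsum : ∀ i : Fin m, ∀ ci : ℚ, (∀ ε ∈ P i, f ε = ci) →
      (∑ k : Fin n, ∑ᶠ ε ∈ P i, lam ε * ε k * a k)
        = (ci / c) * (∑ᶠ ε ∈ P i, lam ε) := by
    intro i ci hci
    have hfi := hfin i
    calc ∑ k : Fin n, ∑ᶠ ε ∈ P i, lam ε * ε k * a k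
        = ∑ k : Fin n, ∑ ε ∈ hfi.toFinset, lam ε * ε k * a k := by
          refine Finset.sum_congr rfl fun k _ => ?_
          rw [← finsum_mem_coe_finset, hfi.coe_toFinset]
      _ = ∑ ε ∈ hfi.toFinset, ∑ k : Fin n, lam ε * ε k * a k := Finset.sum_comm
      _ = ∑ ε ∈ hfi.toFinset, lam ε * (ci / c) := by
          refine Finset.sum_congr rfl fun ε hε => ?_
          have hfe : f ε = ci := hci ε (hfi.mem_toFinset.mp hε)
          have hexp := LinearMap.pi_apply_eq_sum_univ f ε
          have hek : ∑ k : Fin n, ε k * a k = ci / c := by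
            calc ∑ k : Fin n, ε k * a k
                = (∑ k : Fin n, ε k * f (fun j => if k = j then 1 else 0)) / c := by
                  rw [Finset.sum_div]
                  refine Finset.sum_congr rfl fun k _ => ?_
                  rw [ha]; ring
              _ = f ε / c := by
                  simp only [smul_eq_mul] at hexp
                  rw [← hexp]
              _ = ci / c := by rw [hfe]
          calc ∑ k : Fin n, lam ε * ε k * a k
              = lam ε * ∑ k : Fin n, ε k * a k := by
                rw [Finset.mul_sum]
                exact Finset.sum_congr rfl fun k _ => by ring
            _ = lam ε * (ci / c) := by rw [hek]
      _ = (ci / c) * ∑ ε ∈ hfi.toFinset, lam ε := by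
          rw [Finset.mul_sum]
          exact Finset.sum_congr rfl fun ε _ => by ring
      _ = (ci / c) * ∑ᶠ ε ∈ P i, lam ε := by
          rw [← finsum_mem_coe_finset, hfi.coe_toFinset]
  refine ⟨a, ?_, ?_, ?_⟩
  · -- part P 0
    obtain ⟨c0, hc0'⟩ := hconst ⟨0, by omega⟩
    have : c0 = c := by rw [← hc0' ε₀ hε₀P, hc]
    rw [hsum _ c0 hc0', hSum0, this, div_self hc0, mul_one]
  · -- part P 1
    obtain ⟨c1, hc1'⟩ := hconst ⟨1, by omega⟩
    have hmem : -ε₀ ∈ P ⟨1, by omega⟩ := by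
      rw [hNeg]; exact ⟨ε₀, hε₀P, rfl⟩
    have : c1 = -c := by
      rw [← hc1' (-ε₀) hmem, map_neg, hc]
    rw [hsum _ c1 hc1', hSum1, this, neg_div, div_self hc0]
    ring
  · intro i hi
    obtain ⟨ci, hci⟩ := hconst i
    rw [hsum i ci hci, hSumRest i hi, mul_zero]
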